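/- Let t be an odd positive integer. Then a sum of four t-th roots of unity is never zero. -/

import Mathlib

/-- A sum of four `t`-th roots of unity, with `t` odd, is never zero. -/
theorem stmt_3 (t : ℕ) (htpos : 0 < t) (ht : Odd t) (ζ₁ ζ₂ ζ₃ ζ₄ : ℂ)
    (h1 : ζ₁ ^ t = 1) (h2 : ζ₂ ^ t = 1) (h3 : ζ₃ ^ t = 1) (h4 : ζ₄ ^ t = 1) :
    ζ₁ + ζ₂ + ζ₃ + ζ₄ ≠ 0 := by
  -- no ζᵢ can be the negative of another, since t is odd
  have hneg : ∀ a b : ℂ, a ^ t = 1 → b ^ t = 1 → a ≠ -b := by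
    intro a b ha hb hab
    rw [hab, ht.neg_pow, hb] at ha
    norm_num at ha
  -- each ζᵢ is nonzero
  have hz : ∀ a : ℂ, a ^ t = 1 → a ≠ 0 := by
    intro a ha h0
    rw [h0, zero_pow htpos.ne'] at ha
    norm_num at ha
  -- conj ζᵢ = ζᵢ⁻¹
  have hconj : ∀ a : ℂ, a ^ t = 1 → (starRingEnd ℂ) a = a⁻¹ := by
    intro a ha
    have hnorm : ‖a‖ ^ t = 1 := by rw [← norm_pow, ha, norm_one]
    have hnorm1 : ‖a‖ = 1 := by
      rcases lt_trichotomy ‖a‖ 1 with h | h | h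
      · have := pow_lt_one₀ (norm_nonneg a) h htpos.ne'
        linarith
      · exact h
      · have := one_lt_pow₀ h htpos.ne'
        linarith
    have hmc : a * (starRingEnd ℂ) a = 1 := by
      rw [Complex.mul_conj, Complex.normSq_eq_norm_sq, hnorm1]
      norm_num
    exact eq_inv_of_mul_eq_one_right hmc
  intro hsum
  have hc := congrArg (starRingEnd ℂ) hsum
  simp only [map_add, map_zero, hconj _ h1, hconj _ h2, hconj _ h3, hconj _ h4] at hc
  have hinv : ζ₂ * ζ₃ * ζ₄ + ζ₁ * ζ₃ * ζ₄ + ζ₁ * ζ₂ * ζ₄ + ζ₁ * ζ₂ * ζ₃ = 0 := by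
    field_simp [hz _ h1, hz _ h2, hz _ h3, hz _ h4] at hc
    linear_combination hc
  have key : (ζ₁ + ζ₂) * (ζ₁ + ζ₃) * (ζ₁ + ζ₄) = 0 := by
    linear_combination hinv + ζ₁ ^ 2 * hsum
  rcases mul_eq_zero.1 key with h | h
  · rcases mul_eq_zero.1 h with h | h
    · exact hneg ζ₁ ζ₂ h1 h2 (eq_neg_of_add_eq_zero_left h)
    · exact hneg ζ₁ ζ₃ h1 h3 (eq_neg_of_add_eq_zero_left h)
  · exact hneg ζ₁ ζ₄ h1 h4 (eq_neg_of_add_eq_zero_left h)
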